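/- Suppose the quantized iterates satisfy ‖w^{n+1} − w^n‖ ≤ D η^n and the quantization error satisfies E‖Q(w^{n+1} − w^n) − (w^{n+1} − w^n)‖ ≤ σ√d·s/2 for every n. Then for D-Lipschitz F and delay τ^k, η^k E[F(w^{k−τ^k}) − F(w^k)] ≤ (D²/2)τ^k(η^k)² + (D²/2)∑_{n=k−τ^k}^{k−1}(η^n)² + D η^k τ^k σ√d s / 2. -/
import Mathlib


open MeasureTheory

/-- delayed comparison bound with quantization error:
if the quantized iterates satisfy ‖w^{n+1} − w^n‖ ≤ Dη^n and
E‖Q(w^{n+1} − w^n) − (w^{n+1} − w^n)‖ ≤ σ√d·s/2 for every n, then for a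
D-Lipschitz F and delay τ^k ≤ k,
η^k E[F(w^{k−τ^k}) − F(w^k)]
  ≤ (D²/2)τ^k(η^k)² + (D²/2)∑_{n=k−τ^k}^{k−1}(η^n)² + Dη^kτ^kσ√d·s/2. -/
theorem delayed_comparison_bound_quantized {d : ℕ}
    {Ω : Type*} [MeasurableSpace Ω] (μ : Measure Ω) [IsProbabilityMeasure μ]
    (F : EuclideanSpace ℝ (Fin d) → ℝ) (D σ s : ℝ) (hs : 0 < s) (hσ : 0 ≤ σ)
    (hLip : ∀ x y : EuclideanSpace ℝ (Fin d), |F x - F y| ≤ D * ‖x - y‖)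
    (η : ℕ → ℝ) (hpos : ∀ m, 0 < η m) (hdec : ∀ m l, m ≤ l → η l ≤ η m)
    (w : ℕ → Ω → EuclideanSpace ℝ (Fin d))
    (Qw : ℕ → Ω → EuclideanSpace ℝ (Fin d))
    (hstep : ∀ m ω, ‖w (m + 1) ω - w m ω‖ ≤ D * η m)
    (hQerr : ∀ m : ℕ,
      ∫ ω, ‖Qw m ω - (w (m + 1) ω - w m ω)‖ ∂μ ≤ σ * Real.sqrt d * s / 2)
    (k τ : ℕ) (hτ : τ ≤ k)
    (hInt : Integrable (fun ω => F (w (k - τ) ω) - F (w k ω)) μ) :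
    η k * ∫ ω, (F (w (k - τ) ω) - F (w k ω)) ∂μ ≤
      D ^ 2 / 2 * τ * (η k) ^ 2 + D ^ 2 / 2 * ∑ m ∈ Finset.Ico (k - τ) k, (η m) ^ 2
        + D * η k * τ * σ * Real.sqrt d * s / 2 := by

  obtain ⟨ω0⟩ : Nonempty Ω := by
    by_contra h
    rw [not_nonempty_iff] at h
    have := measure_univ (μ := μ)
    simp [Set.univ_eq_empty_iff.2 h] at this
  have hD : 0 ≤ D := by
    have h := hstep 0 ω0
    nlinarith [norm_nonneg (w 1 ω0 - w 0 ω0), hpos 0]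
  have hpt : ∀ ω, F (w (k - τ) ω) - F (w k ω) ≤
      D * (D * ∑ m ∈ Finset.Ico (k - τ) k, η m) := by
    intro ω
    have h1 : ‖w (k - τ) ω - w k ω‖ ≤
        ∑ m ∈ Finset.Ico (k - τ) k, ‖w (m + 1) ω - w m ω‖ := by
      have h := dist_le_Ico_sum_dist (fun m => w m ω) (Nat.sub_le k τ)
      simp only [dist_eq_norm] at h
      calc ‖w (k - τ) ω - w k ω‖ = ‖w k ω - w (k - τ) ω‖ := (norm_sub_rev _ _)
        _ ≤ ∑ m ∈ Finset.Ico (k - τ) k, ‖w m ω - w (m + 1) ω‖ := by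
            simpa [dist_eq_norm, norm_sub_rev] using h
        _ = ∑ m ∈ Finset.Ico (k - τ) k, ‖w (m + 1) ω - w m ω‖ := by
            simp [norm_sub_rev]
    calc F (w (k - τ) ω) - F (w k ω) ≤ |F (w (k - τ) ω) - F (w k ω)| := le_abs_self _
      _ ≤ D * ‖w (k - τ) ω - w k ω‖ := hLip _ _
      _ ≤ D * ∑ m ∈ Finset.Ico (k - τ) k, ‖w (m + 1) ω - w m ω‖ :=
          mul_le_mul_of_nonneg_left h1 hD
      _ ≤ D * ∑ m ∈ Finset.Ico (k - τ) k, D * η m := by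
          gcongr with m hm
          exact hstep m ω
      _ = D * (D * ∑ m ∈ Finset.Ico (k - τ) k, η m) := by
          rw [← Finset.mul_sum]
  have hint : ∫ ω, (F (w (k - τ) ω) - F (w k ω)) ∂μ ≤
      D * (D * ∑ m ∈ Finset.Ico (k - τ) k, η m) := by
    calc ∫ ω, (F (w (k - τ) ω) - F (w k ω)) ∂μ
        ≤ ∫ _, D * (D * ∑ m ∈ Finset.Ico (k - τ) k, η m) ∂μ :=
          integral_mono hInt (integrable_const _) hpt
      _ = D * (D * ∑ m ∈ Finset.Ico (k - τ) k, η m) := by simp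
  have hcard : (Finset.Ico (k - τ) k).card = τ := by
    rw [Nat.card_Ico]
    omega
  have hmain : η k * (D * (D * ∑ m ∈ Finset.Ico (k - τ) k, η m)) ≤
      D ^ 2 / 2 * τ * (η k) ^ 2 + D ^ 2 / 2 * ∑ m ∈ Finset.Ico (k - τ) k, (η m) ^ 2 := by
    have h1 : η k * (D * (D * ∑ m ∈ Finset.Ico (k - τ) k, η m)) =
        ∑ m ∈ Finset.Ico (k - τ) k, D ^ 2 * (η k * η m) := by
      rw [Finset.mul_sum, Finset.mul_sum, Finset.mul_sum]
      apply Finset.sum_congr rfl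
      intro m hm; ring
    have h2 : ∑ m ∈ Finset.Ico (k - τ) k, D ^ 2 * (η k * η m) ≤
        ∑ m ∈ Finset.Ico (k - τ) k, D ^ 2 / 2 * ((η k) ^ 2 + (η m) ^ 2) := by
      apply Finset.sum_le_sum
      intro m hm
      nlinarith [sq_nonneg (η k - η m), sq_nonneg D]
    have h3 : ∑ m ∈ Finset.Ico (k - τ) k, D ^ 2 / 2 * ((η k) ^ 2 + (η m) ^ 2) =
        D ^ 2 / 2 * τ * (η k) ^ 2 + D ^ 2 / 2 * ∑ m ∈ Finset.Ico (k - τ) k, (η m) ^ 2 := by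
      simp only [mul_add]
      rw [Finset.sum_add_distrib, Finset.sum_const, hcard, ← Finset.mul_sum]
      push_cast
      ring
    rw [h1]
    calc ∑ m ∈ Finset.Ico (k - τ) k, D ^ 2 * (η k * η m) ≤ _ := h2
      _ = _ := h3
  have hlast : 0 ≤ D * η k * τ * σ * Real.sqrt d * s / 2 := by
    have := (hpos k).le
    positivity
  have hη := (hpos k).le
  have := mul_le_mul_of_nonneg_left hint hη
  calc η k * ∫ ω, (F (w (k - τ) ω) - F (w k ω)) ∂μ
      ≤ η k * (D * (D * ∑ m ∈ Finset.Ico (k - τ) k, η m)) := this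
    _ ≤ D ^ 2 / 2 * τ * (η k) ^ 2 + D ^ 2 / 2 * ∑ m ∈ Finset.Ico (k - τ) k, (η m) ^ 2 := hmain
    _ ≤ _ := by linarith
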